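/- In the algebra with generators x, y and relation yx = xy − (1/2)x², for all ℓ, n ≥ 0 one has y^ℓ x^n = ∑_{k=0}^{ℓ} binom(ℓ,k) (−1)^k ([n]^{[k]} / 2^k) x^{n+k} y^{ℓ−k}, where [n]^{[k]} = n(n+1)⋯(n+k−1) is the raising factorial. -/
import Mathlib


/-- The raising factorial `[t]^{[k]} = t(t+1)⋯(t+k-1)`. -/
noncomputable def raise {K : Type*} [Field K] (t : K) (k : ℕ) : K :=
  ∏ i ∈ Finset.range k, (t + i)

lemma raise_succ {K : Type*} [Field K] (t : K) (k : ℕ) :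
    raise t (k + 1) = raise t k * (t + k) := Finset.prod_range_succ _ _

/-- In any algebra (over a field of characteristic `≠ 2`) with elements `x, y`
satisfying `yx = xy - (1/2)x²`, for all `ℓ, n ≥ 0` one has
`y^ℓ x^n = ∑_{k=0}^{ℓ} C(ℓ,k) (-1)^k ([n]^{[k]}/2^k) x^{n+k} y^{ℓ-k}`. -/
theorem stmt2 (K : Type*) [Field K] (h2 : (2 : K) ≠ 0)
    (A : Type*) [Ring A] [Algebra K A] (x y : A)
    (hrel : y * x = x * y - (1/2 : K) • x ^ 2) (ℓ n : ℕ) :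
    y ^ ℓ * x ^ n = ∑ k ∈ Finset.range (ℓ + 1),
      ((ℓ.choose k : K) * (-1) ^ k * raise (n : K) k / 2 ^ k) •
        (x ^ (n + k) * y ^ (ℓ - k)) := by
  have hyx : ∀ m : ℕ, y * x ^ m = x ^ m * y - (((m : K))/2) • x ^ (m + 1) := by
    intro m
    induction m with
    | zero => simp
    | succ m ih =>
      have h1 : y * x ^ (m + 1) = (y * x ^ m) * x := by
        rw [pow_succ, ← mul_assoc]
      rw [h1, ih, sub_mul, smul_mul_assoc, mul_assoc, hrel, mul_sub,
        mul_smul_comm, ← mul_assoc, ← pow_succ, ← pow_add, ← pow_succ,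
        sub_sub, ← add_smul]
      have hm : m + 2 = m + 1 + 1 := rfl
      rw [hm]
      congr 1
      push_cast
      ring
  induction ℓ with
  | zero => simp [raise]
  | succ ℓ ih =>
    have key : y ^ (ℓ + 1) * x ^ n = ∑ k ∈ Finset.range (ℓ + 1),
        ((((ℓ.choose k : K) * (-1) ^ k * raise (n : K) k / 2 ^ k) •
          (x ^ (n + k) * y ^ (ℓ + 1 - k)))
         - ((((ℓ.choose k : K) * (-1) ^ k * raise (n : K) k / 2 ^ k) * (((n : K) + k)/2)) •
          (x ^ (n + k + 1) * y ^ (ℓ - k)))) := by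
      rw [pow_succ', mul_assoc, ih, Finset.mul_sum]
      refine Finset.sum_congr rfl fun k hk => ?_
      have hk' : k ≤ ℓ := Nat.lt_succ_iff.mp (Finset.mem_range.mp hk)
      have h5 : ℓ + 1 - k = ℓ - k + 1 := by omega
      rw [mul_smul_comm, ← mul_assoc, hyx (n + k), sub_mul, smul_mul_assoc,
        smul_sub, smul_smul, h5, mul_assoc (x ^ (n + k)) y, ← pow_succ']
      congr 2
      push_cast
      ring
    rw [key, Finset.sum_sub_distrib, Finset.sum_range_succ' (fun k =>
      (((ℓ+1).choose k : K) * (-1) ^ k * raise (n : K) k / 2 ^ k) •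
        (x ^ (n + k) * y ^ (ℓ + 1 - k)))]
    rw [Finset.sum_range_succ' (fun k =>
      (((ℓ).choose k : K) * (-1) ^ k * raise (n : K) k / 2 ^ k) •
        (x ^ (n + k) * y ^ (ℓ + 1 - k)))]
    have hsplit : ∀ i ∈ Finset.range (ℓ + 1),
        ((((ℓ+1).choose (i+1) : K) * (-1) ^ (i+1) * raise (n : K) (i+1) / 2 ^ (i+1)) •
          (x ^ (n + (i+1)) * y ^ (ℓ + 1 - (i+1))))
        = ((((ℓ).choose (i+1) : K) * (-1) ^ (i+1) * raise (n : K) (i+1) / 2 ^ (i+1)) •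
            (x ^ (n + (i+1)) * y ^ (ℓ + 1 - (i+1))))
          - ((((ℓ.choose i : K) * (-1) ^ i * raise (n : K) i / 2 ^ i) * (((n : K) + i)/2)) •
            (x ^ (n + i + 1) * y ^ (ℓ - i))) := by
      intro i hi
      have h3 : ℓ + 1 - (i + 1) = ℓ - i := by omega
      have h4 : n + (i + 1) = n + i + 1 := by omega
      rw [h3, h4, ← sub_smul, Nat.choose_succ_succ, raise_succ]
      congr 1
      push_cast
      field_simp
      ring
    rw [Finset.sum_congr rfl hsplit, Finset.sum_sub_distrib]
    simp only [Nat.choose_zero_right, Nat.cast_one, pow_zero, Nat.add_sub_cancel,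
      Nat.sub_zero, Nat.add_zero]
    rw [Finset.sum_range_succ (fun k =>
      ((ℓ.choose (k+1) : K) * (-1) ^ (k+1) * raise (n : K) (k+1) / 2 ^ (k+1)) •
        (x ^ (n + (k+1)) * y ^ (ℓ + 1 - (k+1))))]
    simp only [Nat.choose_succ_self, Nat.cast_zero, zero_mul, zero_div, zero_smul, add_zero]
    abel
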